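/- Let n ≥ 1 and let B, R be I_n × I_n complex matrices such that B − Σ_{k=1}^N C_{k,n} B C_{k,n}ᴴ = R. Then B = Σ_{σ ∈ I_n} C_{σ,n} R C_{σ,n}ᴴ, where for σ = i_1⋯i_k, C_{σ,n} = C_{i_1,n}·C_{i_2,n}·⋯·C_{i_k,n} and C_{∅,n} = I. In particular, B is uniquely determined by R. -/

import Mathlib

open scoped ComplexOrder Matrix

noncomputable section

/-- Words over the alphabet `{1,…,N}`: the free monoid `F_N^+` (the empty list is `∅`,
`++` is concatenation). -/
abbrev Word (N : ℕ) := List (Fin N)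

/-- `I_n = {σ ∈ F_N^+ : |σ| ≤ n}`, a finite set. -/
abbrev In (N n : ℕ) := {σ : Word N // σ.length ≤ n}

instance {N n : ℕ} : Fintype (In N n) := (List.finite_length_le (Fin N) n).fintype

/-- The `I_n × I_n` matrix `C_{k,n}` with entries `1` at `(kτ, τ)` and `0` elsewhere. -/
def Cmat {N n : ℕ} (k : Fin N) : Matrix (In N n) (In N n) ℂ :=
  Matrix.of fun σ τ => if σ.1 = k :: τ.1 then 1 else 0

/-- For `x : I_n → ℂ`, the matrix `U(x)` with `U(x)_{σ,τ} = x(τ')` if `τ = στ'` and `0`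
otherwise. -/
def Umat {N n : ℕ} (x : In N n → ℂ) : Matrix (In N n) (In N n) ℂ :=
  Matrix.of fun σ τ =>
    if h : σ.1 <+: τ.1 then
      x ⟨τ.1.drop σ.1.length, by rw [List.length_drop]; exact le_trans (Nat.sub_le _ _) τ.2⟩
    else 0

def Cp {N n : ℕ} (σ : Word N) : Matrix (In N n) (In N n) ℂ :=
  (σ.map (Cmat (N := N) (n := n))).prod

lemma Cp_apply {N n : ℕ} (σ : Word N) (α τ : In N n) :
    Cp (N := N) (n := n) σ α τ = if α.1 = σ ++ τ.1 then 1 else 0 := by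
  induction σ generalizing α with
  | nil =>
    simp only [Cp, List.map_nil, List.prod_nil, Matrix.one_apply, List.nil_append]
    simp [Subtype.ext_iff]
  | cons k σ ih =>
    rw [Cp, List.map_cons, List.prod_cons, show (σ.map (Cmat (N:=N) (n:=n))).prod = Cp σ from rfl,
      Matrix.mul_apply]
    by_cases hs : (σ ++ τ.1).length ≤ n
    · rw [Finset.sum_eq_single (⟨σ ++ τ.1, hs⟩ : In N n)]
      · rw [ih, Cmat]; simp
      · intro b _ hb
        rw [ih, if_neg, mul_zero]
        exact fun hh => hb (Subtype.ext hh)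
      · exact fun h => absurd (Finset.mem_univ _) h
    · rw [if_neg, Finset.sum_eq_zero]
      · intro b _
        rw [ih, if_neg, mul_zero]
        exact fun hb => hs (hb ▸ b.2)
      · intro hα
        apply hs
        have h2 := α.2
        rw [hα] at h2
        simp only [List.length_cons, List.length_append] at h2 ⊢
        omega

lemma Cp_zero {N n : ℕ} {σ : Word N} (hσ : n < σ.length) :
    Cp (N := N) (n := n) σ = 0 := by
  ext α τ
  rw [Cp_apply, Matrix.zero_apply, if_neg]
  intro hh
  have := α.2
  rw [hh, List.length_append] at this
  omega

lemma Cp_append {N n : ℕ} (σ τ : Word N) :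
    Cp (N := N) (n := n) (σ ++ τ) = Cp σ * Cp τ := by
  simp [Cp, List.map_append, List.prod_append]

lemma step_lemma {N n : ℕ} {B R : Matrix (In N n) (In N n) ℂ}
    (h : B - ∑ k : Fin N, Cmat k * B * (Cmat k)ᴴ = R) (σ : Word N) :
    Cp σ * B * (Cp σ)ᴴ
      = Cp σ * R * (Cp σ)ᴴ
        + ∑ k : Fin N, Cp (σ ++ [k]) * B * (Cp (σ ++ [k]))ᴴ := by
  have hB : B = R + ∑ k : Fin N, Cmat k * B * (Cmat k)ᴴ := by
    rw [← h]; abel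
  conv_lhs => rw [hB]
  have hck : ∀ k : Fin N, Cp (N := N) (n := n) (σ ++ [k]) = Cp σ * Cmat k := by
    intro k; rw [Cp_append]; simp [Cp]
  simp only [hck, Matrix.mul_add, Matrix.add_mul, Matrix.conjTranspose_mul,
    Finset.mul_sum, Finset.sum_mul, Matrix.mul_assoc]


/-- If `B − ∑ₖ C_{k,n} B C_{k,n}ᴴ = R` then
`B = ∑_{σ ∈ I_n} C_{σ,n} R C_{σ,n}ᴴ`, where `C_{σ,n} = C_{i₁,n}⋯C_{i_k,n}` for `σ = i₁⋯i_k`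
and `C_{∅,n} = 1`; in particular `B` is uniquely determined by `R`. -/
theorem displacement_unique_solution {N n : ℕ} (hN : 1 ≤ N) (hn : 1 ≤ n)
    (B R : Matrix (In N n) (In N n) ℂ)
    (h : B - ∑ k : Fin N, Cmat k * B * (Cmat k)ᴴ = R) :
    B = ∑ σ : In N n,
      (σ.1.map (Cmat (N := N) (n := n))).prod * R * ((σ.1.map (Cmat (N := N) (n := n))).prod)ᴴ := by
  have key : ∀ m, m ≤ n + 1 →
      B = (∑ σ ∈ Finset.univ.filter (fun σ : In N n => σ.1.length < m),
              Cp σ.1 * R * (Cp σ.1)ᴴ)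
        + ∑ v : Fin m → Fin N, Cp (List.ofFn v) * B * (Cp (List.ofFn v))ᴴ := by
    intro m
    induction m with
    | zero =>
      intro _
      simp [Cp, Finset.filter_false, List.ofFn_zero]
    | succ m ih =>
      intro hm
      have hmn : m ≤ n := by omega
      have hbij : ∑ v : Fin m → Fin N, Cp (List.ofFn v) * R * (Cp (List.ofFn v))ᴴ
          = ∑ σ ∈ Finset.univ.filter (fun σ : In N n => σ.1.length = m),
              Cp σ.1 * R * (Cp σ.1)ᴴ := by
        apply Finset.sum_bij (i := fun (v : Fin m → Fin N) _ =>
          (⟨List.ofFn v, by rw [List.length_ofFn]; exact hmn⟩ : In N n))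
        · intro v _
          simp [List.length_ofFn]
        · intro v _ w _ hvw
          simp only [Subtype.mk.injEq] at hvw
          exact List.ofFn_injective hvw
        · intro σ hσ
          simp only [Finset.mem_filter, Finset.mem_univ, true_and] at hσ
          refine ⟨fun i => σ.1.get (Fin.cast hσ.symm i), Finset.mem_univ _, ?_⟩
          apply Subtype.ext
          apply List.ext_getElem
          · simp [hσ]
          · intro i h1 h2
            simp [List.getElem_ofFn]
        · intro v _
          rfl
      have hstep : ∑ v : Fin m → Fin N, Cp (List.ofFn v) * B * (Cp (List.ofFn v))ᴴ
          = (∑ v : Fin m → Fin N, Cp (List.ofFn v) * R * (Cp (List.ofFn v))ᴴ)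
            + ∑ v : Fin (m + 1) → Fin N, Cp (List.ofFn v) * B * (Cp (List.ofFn v))ᴴ := by
        rw [Finset.sum_congr rfl (fun v _ => step_lemma h (List.ofFn v)),
          Finset.sum_add_distrib]
        congr 1
        have he : ∀ (p : Fin N × (Fin m → Fin N)),
            List.ofFn (Fin.snocEquiv (fun _ => Fin N) p) = List.ofFn p.2 ++ [p.1] := by
          intro p
          rw [List.ofFn_succ']
          simp [Fin.snocEquiv, List.concat_eq_append]
        rw [Finset.sum_comm]
        refine Eq.trans (Fintype.sum_prod_type (f := fun p : Fin N × (Fin m → Fin N) =>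
          Cp (List.ofFn p.2 ++ [p.1]) * B * (Cp (List.ofFn p.2 ++ [p.1]))ᴴ)).symm ?_
        exact Fintype.sum_equiv (Fin.snocEquiv (fun _ => Fin N))
          (fun p => Cp (List.ofFn p.2 ++ [p.1]) * B * (Cp (List.ofFn p.2 ++ [p.1]))ᴴ)
          (fun w => Cp (List.ofFn w) * B * (Cp (List.ofFn w))ᴴ)
          (fun p => by simp only [he])
      have hsplit : Finset.univ.filter (fun σ : In N n => σ.1.length < m + 1)
          = Finset.univ.filter (fun σ : In N n => σ.1.length < m)
            ∪ Finset.univ.filter (fun σ : In N n => σ.1.length = m) := by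
        rw [← Finset.filter_or]
        apply Finset.filter_congr
        intro σ _
        exact Nat.lt_succ_iff_lt_or_eq
      have hdisj : Disjoint (Finset.univ.filter (fun σ : In N n => σ.1.length < m))
          (Finset.univ.filter (fun σ : In N n => σ.1.length = m)) := by
        rw [Finset.disjoint_left]
        intro σ h1 h2
        simp only [Finset.mem_filter] at h1 h2
        omega
      rw [hsplit, Finset.sum_union hdisj, ← hbij]
      conv_lhs => rw [ih (by omega)]
      rw [hstep, ← add_assoc]
  have hkey := key (n + 1) le_rfl
  have h0 : ∀ v : Fin (n + 1) → Fin N, Cp (N := N) (n := n) (List.ofFn v) = 0 := fun v =>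
    Cp_zero (by simp)
  simp only [h0, zero_mul, Finset.sum_const_zero, add_zero] at hkey
  rw [Finset.filter_true_of_mem (fun σ _ => Nat.lt_succ_of_le σ.2)] at hkey
  exact hkey
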